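/- Let A ⊕ B = ℤ_M be a tiling, p a prime with p^n ‖ M. Assume M/p ∉ Div(A) (i.e., there are no distinct a, a' ∈ A with gcd(a − a', M) = M/p). If a fiber x * F_p splits with parity (B, A), witnessed by representations a_ν + b_ν = x + νM/p (ν = 0, …, p−1), then the elements b_0, …, b_{p−1} are pairwise distinct; in particular |Σ_B(x * F_p)| = p and |B ∩ Π(b_0, p^n)| ≥ p. -/
import Mathlib


/-- `A ⊕ B = ℤ_M`: every element of `ZMod M` has a unique representation `a + b`
with `a ∈ A`, `b ∈ B`. -/
def IsTiling (M : ℕ) (A B : Finset (ZMod M)) : Prop :=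
  ∀ z : ZMod M, ∃! ab : ZMod M × ZMod M, ab.1 ∈ A ∧ ab.2 ∈ B ∧ ab.1 + ab.2 = z

/-- The divisor set `Div(S) = {gcd(s - s', M) : s, s' ∈ S}`, gcd computed with the
canonical representative in `{0, …, M-1}` (so `gcd(0, M) = M`). -/
def DivSet (M : ℕ) (S : Finset (ZMod M)) : Set ℕ :=
  {d | ∃ s ∈ S, ∃ s' ∈ S, d = Nat.gcd (s - s').val M}

/-- The fiber `x * F_p = {x + ν·(M/p) : 0 ≤ ν < p}` in the `p` direction. -/
def fiberSet (M p : ℕ) (x : ZMod M) : Set (ZMod M) :=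
  {z | ∃ ν < p, z = x + ((ν * (M / p) : ℕ) : ZMod M)}

/-- `Σ_A(Z)`: the elements of `A` used in representations of elements of `Z`
in the tiling `A ⊕ B`. -/
def SigmaSet (M : ℕ) (A B : Finset (ZMod M)) (Z : Set (ZMod M)) : Set (ZMod M) :=
  {a | a ∈ A ∧ ∃ b ∈ B, a + b ∈ Z}

/-- `Z` splits with parity `(A, B)`: `p^n` divides all differences of elements of
`Σ_A(Z)`, and `p^{n-1}` exactly divides differences of distinct elements of `Σ_B(Z)`
(divisibility of differences measured on canonical representatives in `ZMod M`). -/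
def SplitsParity (M p n : ℕ) (A B : Finset (ZMod M)) (Z : Set (ZMod M)) : Prop :=
  (∀ a ∈ SigmaSet M A B Z, ∀ a' ∈ SigmaSet M A B Z, (p ^ n : ℕ) ∣ ((a - a' : ZMod M)).val) ∧
  (∀ b ∈ SigmaSet M B A Z, ∀ b' ∈ SigmaSet M B A Z, b ≠ b' →
    (p ^ (n - 1) : ℕ) ∣ ((b - b' : ZMod M)).val ∧ ¬ (p ^ n : ℕ) ∣ ((b - b' : ZMod M)).val)

theorem stmt14 (M p n : ℕ) [NeZero M] (hp : p.Prime) (hn : 1 ≤ n)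
    (hpn : p ^ n ∣ M) (hpn' : ¬ p ^ (n + 1) ∣ M)
    (A B : Finset (ZMod M)) (h : IsTiling M A B)
    (hDiv : M / p ∉ DivSet M A)
    (x : ZMod M) (hsplit : SplitsParity M p n B A (fiberSet M p x))
    (a b : ℕ → ZMod M)
    (hab : ∀ ν < p, a ν ∈ A ∧ b ν ∈ B ∧
      a ν + b ν = x + ((ν * (M / p) : ℕ) : ZMod M)) :
    (∀ ν < p, ∀ μ < p, ν ≠ μ → b ν ≠ b μ) ∧
    (SigmaSet M B A (fiberSet M p x)).ncard = p ∧
    p ≤ (B.filter fun y => (p ^ n : ℕ) ∣ ((y - b 0 : ZMod M)).val).card := by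

  have hp1 : 1 < p := hp.one_lt
  have hpM : p ∣ M := dvd_trans (dvd_pow_self p (Nat.one_le_iff_ne_zero.mp hn)) hpn
  have hMp : p * (M / p) = M := Nat.mul_div_cancel' hpM
  have hMp0 : 0 < M / p :=
    Nat.div_pos (Nat.le_of_dvd (NeZero.pos M) hpM) (by omega)
  -- key: distinctness for μ < ν
  have key : ∀ ν μ : ℕ, μ < ν → ν < p → b ν ≠ b μ := by
    intro ν μ hlt hν hbe
    obtain ⟨haν, hbν, heν⟩ := hab ν hν
    obtain ⟨haμ, hbμ, heμ⟩ := hab μ (hlt.trans hν)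
    apply hDiv
    refine ⟨a ν, haν, a μ, haμ, ?_⟩
    have hsub : (a ν - a μ : ZMod M) = (((ν - μ) * (M / p) : ℕ) : ZMod M) := by
      have h1 : (a ν : ZMod M) = x + ((ν * (M / p) : ℕ) : ZMod M) - b ν := by
        rw [← heν]; ring
      have h2 : (a μ : ZMod M) = x + ((μ * (M / p) : ℕ) : ZMod M) - b μ := by
        rw [← heμ]; ring
      have hle : μ * (M / p) ≤ ν * (M / p) := Nat.mul_le_mul_right _ hlt.le
      rw [h1, h2, hbe, Nat.sub_mul, Nat.cast_sub hle]
      ring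
    have hlt2 : (ν - μ) * (M / p) < M := by
      have : ν - μ < p := by omega
      calc (ν - μ) * (M / p) < p * (M / p) := by
            exact Nat.mul_lt_mul_of_lt_of_le this le_rfl hMp0
        _ = M := hMp
    have hval : ((((ν - μ) * (M / p) : ℕ)) : ZMod M).val = (ν - μ) * (M / p) :=
      ZMod.val_cast_of_lt hlt2
    rw [hsub, hval]
    have hcop : Nat.Coprime (ν - μ) p :=
      (hp.coprime_iff_not_dvd.mpr (by
        intro hd
        have := Nat.le_of_dvd (by omega) hd
        omega)).symm
    symm
    calc Nat.gcd ((ν - μ) * (M / p)) M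
        = Nat.gcd ((ν - μ) * (M / p)) (p * (M / p)) := by rw [hMp]
      _ = Nat.gcd (ν - μ) p * (M / p) := (Nat.gcd_mul_right _ _ _)
      _ = 1 * (M / p) := by rw [hcop]
      _ = M / p := one_mul _
  have hne : ∀ ν < p, ∀ μ < p, ν ≠ μ → b ν ≠ b μ := by
    intro ν hν μ hμ hne
    rcases lt_or_gt_of_ne hne with hlt | hlt
    · exact (key μ ν hlt hμ).symm
    · exact key ν μ hlt hν
  -- each b ν ∈ SigmaSet
  have hmem : ∀ ν < p, b ν ∈ SigmaSet M B A (fiberSet M p x) := by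
    intro ν hν
    obtain ⟨haν, hbν, heν⟩ := hab ν hν
    exact ⟨hbν, a ν, haν, ⟨ν, hν, by rw [add_comm, heν]⟩⟩
  -- SigmaSet description
  have hSig : SigmaSet M B A (fiberSet M p x) = ↑((Finset.range p).image b) := by
    ext y
    simp only [Finset.coe_image, Finset.coe_range, Set.mem_image, Set.mem_Iio]
    constructor
    · rintro ⟨hyB, a', ha'A, ν, hν, hfz⟩
      refine ⟨ν, hν, ?_⟩
      obtain ⟨haν, hbν, heν⟩ := hab ν hν
      obtain ⟨w, -, huniq⟩ := h (x + ((ν * (M / p) : ℕ) : ZMod M))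
      have h1 : ((a', y) : ZMod M × ZMod M) = w :=
        huniq (a', y) ⟨ha'A, hyB, by rw [add_comm]; exact hfz⟩
      have h2 : ((a ν, b ν) : ZMod M × ZMod M) = w :=
        huniq (a ν, b ν) ⟨haν, hbν, heν⟩
      have := h1.trans h2.symm
      exact (congrArg Prod.snd this).symm
    · rintro ⟨ν, hν, rfl⟩
      exact hmem ν hν
  have hinj : Set.InjOn b ↑(Finset.range p) := by
    intro ν hν μ hμ hbe
    simp only [Finset.coe_range, Set.mem_Iio] at hν hμ
    by_contra hc
    exact hne ν hν μ hμ hc hbe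
  have hcard : ((Finset.range p).image b).card = p := by
    rw [Finset.card_image_of_injOn hinj, Finset.card_range]
  refine ⟨hne, ?_, ?_⟩
  · rw [hSig, Set.ncard_coe_finset, hcard]
  · have hsubset : (Finset.range p).image b ⊆
        B.filter fun y => (p ^ n : ℕ) ∣ ((y - b 0 : ZMod M)).val := by
      intro y hy
      simp only [Finset.mem_image, Finset.mem_range] at hy
      obtain ⟨ν, hν, rfl⟩ := hy
      obtain ⟨haν, hbν, heν⟩ := hab ν hν
      refine Finset.mem_filter.mpr ⟨hbν, ?_⟩
      exact hsplit.1 (b ν) (hmem ν hν) (b 0) (hmem 0 (by omega))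
    calc p = ((Finset.range p).image b).card := hcard.symm
      _ ≤ _ := Finset.card_le_card hsubset
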